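/- Ω is Kolmogorov random: there exists a constant k such that for all n, K(Ω[n]) > n - k, where Ω[n] denotes the first n bits of Ω and K is prefix-free Kolmogorov complexity. Hence reals that are random in the sense of Kolmogorov exist. -/

import Mathlib

open MeasureTheory
open scoped ENNReal

/-- The length-`n` initial segment of an infinite binary sequence. -/
def pref (x : ℕ → Bool) (n : ℕ) : List Bool := List.ofFn (fun i : Fin n => x i)

/-- A set of binary strings is prefix-free if no member is a proper prefix of another. -/
def PFree (S : Set (List Bool)) : Prop := ∀ a ∈ S, ∀ b ∈ S, a <+: b → a = b

/-- Kolmogorov complexity of `b` relative to machine `M`: the least length of an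
input mapped by `M` to `b`, `∞` if there is none. -/
noncomputable def Cpx (M : List Bool →. List Bool) (b : List Bool) : ℕ∞ :=
  sInf {n : ℕ∞ | ∃ p : List Bool, b ∈ M p ∧ (p.length : ℕ∞) = n}

/-- A universal machine for plain complexity. -/
def Universal (U : List Bool →. List Bool) : Prop :=
  Partrec U ∧ ∀ L : List Bool →. List Bool, Partrec L →
    ∃ k : ℕ, ∀ b : List Bool, Cpx U b ≤ Cpx L b + (k : ℕ∞)

/-- A prefix-free universal machine: prefix-free domain, universal among machines
with prefix-free domain. -/
def PFUniversal (V : List Bool →. List Bool) : Prop :=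
  Partrec V ∧ PFree {p | (V p).Dom} ∧
    ∀ L : List Bool →. List Bool, Partrec L → PFree {p | (L p).Dom} →
      ∃ k : ℕ, ∀ b : List Bool, Cpx V b ≤ Cpx L b + (k : ℕ∞)

/-- `cyl S` is the set of infinite binary sequences extending some member of `S`. -/
def cyl (S : Set (List Bool)) : Set (ℕ → Bool) := {x | ∃ b ∈ S, pref x b.length = b}

/-- The `e`-th computably enumerable set of binary strings. -/
def W (e : ℕ) : Set (List Bool) :=
  {b | ((Denumerable.ofNat Nat.Partrec.Code e).eval (Encodable.encode b)).Dom}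

/-- The binary-digit expansion of a real number. -/
noncomputable def binSeq (r : ℝ) : ℕ → Bool := fun n => decide (⌊r * 2 ^ (n + 1)⌋ % 2 = 1)

/-- The fair-coin (uniform product) measure on Cantor space, as the pushforward of
Lebesgue measure on `(0,1]` under binary expansion. -/
noncomputable def coin : Measure (ℕ → Bool) :=
  Measure.map binSeq (volume.restrict (Set.Ioc (0 : ℝ) 1))

/-- Martin-Löf test in sense 2. -/
def MLTest (f : ℕ → ℕ) : Prop :=
  Computable f ∧ ∀ n : ℕ, coin (cyl (W (f n))) ≤ (2 : ℝ≥0∞)⁻¹ ^ n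

/-- `x` fails the sense-2 test `f`. -/
def Fails (x : ℕ → Bool) (f : ℕ → ℕ) : Prop := ∀ n : ℕ, x ∈ cyl (W (f n))

/-- Martin-Löf randomness (sense 2). -/
def MLRandom (x : ℕ → Bool) : Prop := ∀ f : ℕ → ℕ, MLTest f → ¬ Fails x f

/-- The dyadic rational value of a finite binary string. -/
noncomputable def sval (b : List Bool) : ℝ :=
  ∑ i : Fin b.length, if b.get i then ((2 : ℝ))⁻¹ ^ (i.val + 1) else 0

/-- Chaitin's halting probability of machine `V`. -/
noncomputable def Omega (V : List Bool →. List Bool) : ℝ :=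
  ∑' p : {p : List Bool // (V p).Dom}, ((2 : ℝ))⁻¹ ^ (p.val.length)

/-- Martin-Löf test in sense 1. -/
def MLTest1 (t : List Bool →. ℕ) : Prop :=
  Partrec t ∧ ∀ m : ℕ, coin (cyl {b | ∃ v ∈ t b, m ≤ v}) ≤ (2 : ℝ≥0∞)⁻¹ ^ m

/-- `x` passes the sense-1 test `t`: the values of `t` on `x`'s prefixes are bounded. -/
def Passes1 (x : ℕ → Bool) (t : List Bool →. ℕ) : Prop :=
  ∃ B : ℕ, ∀ (n : ℕ) (v : ℕ), v ∈ t (pref x n) → v ≤ B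

/-- A set of binary strings is computably enumerable. -/
def CE (S : Set (List Bool)) : Prop :=
  ∃ f : List Bool →. ℕ, Partrec f ∧ S = {b | (f b).Dom}

namespace Stmt15Aux

open Nat.Partrec (Code)
open Nat.Partrec.Code Encodable

/-- numerator of `sval`: `sval b = svalNat b / 2 ^ b.length`. -/
def svalNat : List Bool → ℕ
  | [] => 0
  | a :: l => (cond a (2 ^ l.length) 0) + svalNat l

theorem sval_cons (a : Bool) (l : List Bool) :
    sval (a :: l) = (cond a ((2:ℝ)⁻¹) 0) + 2⁻¹ * sval l := by
  unfold sval
  show (∑ i : Fin (l.length + 1),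
      if (a :: l).get i = true then (2:ℝ)⁻¹ ^ ((i : ℕ) + 1) else 0) = _
  rw [Fin.sum_univ_succ]
  congr 1
  · cases a <;> simp
  · rw [Finset.mul_sum]
    refine Finset.sum_congr rfl fun i _ => ?_
    have h1 : (a :: l).get i.succ = l.get i := rfl
    rw [h1]
    split_ifs
    · have h2 : ((i.succ : ℕ) + 1) = ((i : ℕ) + 1) + 1 := rfl
      rw [h2, pow_succ]
      ring
    · ring

theorem sval_eq (b : List Bool) : sval b = (svalNat b : ℝ) / 2 ^ b.length := by
  induction b with
  | nil => simp [sval, svalNat]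
  | cons a l ih =>
      have h2 : (2:ℝ) ^ l.length ≠ 0 := by positivity
      rw [sval_cons, ih]
      show _ = ((svalNat (a :: l) : ℝ)) / 2 ^ (l.length + 1)
      cases a
      · simp only [svalNat, cond_false]
        push_cast
        rw [pow_succ]
        ring
      · simp only [svalNat, cond_true]
        push_cast
        rw [pow_succ]
        have e1 : ((2:ℝ)^l.length + (svalNat l : ℝ))/(2^l.length * 2)
            = 2⁻¹ * (((2:ℝ)^l.length)/2^l.length + (svalNat l : ℝ)/2^l.length) := by
          rw [add_div]; ring
        rw [e1, div_self h2]
        ring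

theorem sval_nonneg (b : List Bool) : 0 ≤ sval b := by
  unfold sval
  refine Finset.sum_nonneg fun i _ => ?_
  split_ifs <;> positivity

theorem cond_some_eq {α : Type*} {b : Bool} {q p : α}
    (h : (bif b then some q else none) = some p) : b = true ∧ q = p := by
  cases b <;> simp_all

theorem cond_opt_eq {α : Type*} {b : Bool} {o : Option α} {p : α}
    (h : (bif b then o else none) = some p) : b = true ∧ o = some p := by
  cases b <;> simp_all

theorem cond_none_eq {α : Type*} {b : Bool} {q p : α}
    (h : (bif b then none else some q) = some p) : b = false ∧ q = p := by
  cases b <;> simp_all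

/-- Programs (as binary strings) with code `< s`, length `≤ s`, halting within `s` steps. -/
def stageList (c : Code) (s : ℕ) : List (List Bool) :=
  (List.range s).filterMap fun k =>
    (Encodable.decode (α := List Bool) k).bind fun p =>
      cond (decide (Encodable.encode p = k) && decide (p.length ≤ s)
            && (Nat.Partrec.Code.evaln s c k).isSome) (some p) none

theorem mem_stageList {c : Code} {s : ℕ} {p : List Bool} :
    p ∈ stageList c s ↔
      encode p < s ∧ p.length ≤ s ∧ (evaln s c (encode p)).isSome := by
  simp only [stageList, List.mem_filterMap, List.mem_range]
  constructor
  · rintro ⟨k, hk, h⟩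
    rcases Option.bind_eq_some_iff.1 h with ⟨q, _hq, hif⟩
    obtain ⟨hb, rfl⟩ := cond_some_eq hif
    simp only [Bool.and_eq_true, decide_eq_true_eq] at hb
    obtain ⟨⟨he, hl⟩, hs⟩ := hb
    subst he
    exact ⟨hk, hl, hs⟩
  · rintro ⟨h1, h2, h3⟩
    refine ⟨encode p, h1, ?_⟩
    rw [Encodable.encodek, Option.bind_some]
    have hb : (decide (Encodable.encode p = Encodable.encode p) && decide (p.length ≤ s)
        && (Nat.Partrec.Code.evaln s c (Encodable.encode p)).isSome) = true := by
      simp [h2, h3]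
    rw [hb]
    rfl

theorem nodup_stageList (c : Code) (s : ℕ) : (stageList c s).Nodup := by
  refine List.Nodup.filterMap ?_ (List.nodup_range (n := s))
  intro k k' p hp hp'
  have hk : ∀ {j : ℕ}, p ∈ ((Encodable.decode (α := List Bool) j).bind fun q =>
      cond (decide (Encodable.encode q = j) && decide (q.length ≤ s)
            && (Nat.Partrec.Code.evaln s c j).isSome) (some q) none) →
        Encodable.encode p = j := by
    intro j hj
    rcases Option.bind_eq_some_iff.1 hj with ⟨q, _hq, hif⟩
    obtain ⟨hb, rfl⟩ := cond_some_eq hif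
    simp only [Bool.and_eq_true, decide_eq_true_eq] at hb
    exact hb.1.1
  rw [← hk hp, ← hk hp']

/-- total weight (times `2^s`) of programs seen at stage `s`. -/
def wsum (c : Code) (s : ℕ) : ℕ := ((stageList c s).map fun p => 2 ^ (s - p.length)).sum

def condb (c : Code) (σ : List Bool) (s : ℕ) : Bool :=
  decide (svalNat σ * 2 ^ s < wsum c s * 2 ^ σ.length)

/-- encoded outputs of stage-`s` programs of length `≤ |σ|`. -/
def outList (c : Code) (σ : List Bool) (s : ℕ) : List ℕ :=
  (stageList c s).filterMap fun p =>
    cond (decide (p.length ≤ σ.length)) (Nat.Partrec.Code.evaln s c (Encodable.encode p)) none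

def memb (x : ℕ) (O : List ℕ) : Bool := O.foldr (fun a r => decide (a = x) || r) false

theorem memb_iff {x : ℕ} {O : List ℕ} : memb x O = true ↔ x ∈ O := by
  induction O with
  | nil => simp [memb]
  | cons a l ih =>
      simp only [memb, List.foldr_cons, Bool.or_eq_true, decide_eq_true_eq, List.mem_cons]
      rw [show (List.foldr (fun a r => decide (a = x) || r) false l) = memb x l from rfl, ih]
      constructor
      · rintro (h | h)
        · exact Or.inl h.symm
        · exact Or.inr h
      · rintro (h | h)
        · exact Or.inl h.symm
        · exact Or.inr h

/-- a string avoiding all the outputs in `outList`. -/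
def fresh (c : Code) (σ : List Bool) (s : ℕ) : List Bool :=
  (((List.range (s + 1)).map fun i => List.replicate i true).filterMap fun r =>
    cond (memb (Encodable.encode r) (outList c σ s)) none (some r)).headI

theorem headI_mem {α : Type*} [Inhabited α] {l : List α} (h : l ≠ []) : l.headI ∈ l := by
  cases l with
  | nil => exact absurd rfl h
  | cons a l => simp

theorem fresh_spec (c : Code) (σ : List Bool) (s : ℕ) :
    encode (fresh c σ s) ∉ outList c σ s := by
  set O := outList c σ s with hO
  have hOlen : O.length ≤ s := by
    refine le_trans (List.length_filterMap_le _ _) ?_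
    refine le_trans (List.length_filterMap_le _ _) ?_
    simp
  set cands := ((List.range (s + 1)).map fun i => List.replicate i true) with hcands
  have hcnd : cands.Nodup := by
    refine List.Nodup.map ?_ (List.nodup_range (n := _))
    intro i j h
    have := congrArg List.length h
    simpa using this
  have hex : ∃ r ∈ cands, encode r ∉ O := by
    by_contra hcon
    push_neg at hcon
    have hsub : (cands.map encode) ⊆ O := by
      intro v hv
      rcases List.mem_map.1 hv with ⟨r, hr, rfl⟩
      exact hcon r hr
    have hnd2 : (cands.map encode).Nodup := hcnd.map (fun a b h => Encodable.encode_injective h)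
    have h1 : (cands.map encode).toFinset.card = s + 1 := by
      rw [List.toFinset_card_of_nodup hnd2]
      simp [hcands]
    have h2 : (cands.map encode).toFinset ⊆ O.toFinset := by
      intro v hv
      rw [List.mem_toFinset] at hv ⊢
      exact hsub hv
    have h4 := Finset.card_le_card h2
    have h3 := List.toFinset_card_le O
    omega
  obtain ⟨r, hr, hrO⟩ := hex
  have hmem : r ∈ cands.filterMap fun r =>
      cond (memb (Encodable.encode r) O) none (some r) := by
    refine List.mem_filterMap.2 ⟨r, hr, ?_⟩
    have hmf : memb (Encodable.encode r) O = false := by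
      rcases Bool.eq_false_or_eq_true (memb (Encodable.encode r) O) with h | h
      · exact absurd (memb_iff.1 h) hrO
      · exact h
    rw [hmf]
    rfl
  have hne : (cands.filterMap fun r =>
      cond (memb (Encodable.encode r) O) none (some r)) ≠ [] :=
    List.ne_nil_of_mem hmem
  have hh := headI_mem hne
  rcases List.mem_filterMap.1 hh with ⟨r', _hr', hif⟩
  obtain ⟨hb, heq⟩ := cond_none_eq hif
  have hfr : fresh c σ s = (cands.filterMap fun r =>
      cond (memb (Encodable.encode r) O) none (some r)).headI := rfl
  show encode (fresh c σ s) ∉ O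
  rw [hfr, ← heq]
  intro hcon
  rw [← memb_iff, hb] at hcon
  cases hcon

theorem listsum_pow {s : ℕ} {l : List (List Bool)} (h : ∀ p ∈ l, p.length ≤ s) :
    ((l.map fun p => ((2:ℝ)⁻¹) ^ p.length).sum)
      = (((l.map fun p => 2 ^ (s - p.length)).sum : ℕ) : ℝ) / 2 ^ s := by
  induction l with
  | nil => simp
  | cons p l ih =>
      simp only [List.map_cons, List.sum_cons]
      rw [ih (fun q hq => h q (by simp [hq]))]
      have hp : p.length ≤ s := h p (by simp)
      push_cast
      rw [add_div]
      congr 1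
      rw [pow_sub₀ (2:ℝ) two_ne_zero hp, inv_pow, mul_comm, mul_div_assoc,
        div_self (by positivity : (2:ℝ)^s ≠ 0), mul_one]

section Semantics

variable {V : List Bool →. List Bool} {c : Code}

/-- characterization of `c.eval` when `c` codes the lift of `V`. -/
def Codes (V : List Bool →. List Bool) (c : Code) : Prop :=
  c.eval = fun n => Part.bind ((Encodable.decode (α := List Bool) n : Option (List Bool)) :
    Part (List Bool)) fun a => (V a).map Encodable.encode

theorem eval_char (hc : Codes V c) (p : List Bool) (v : ℕ) :
    v ∈ c.eval (encode p) ↔ ∃ y ∈ V p, encode y = v := by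
  rw [hc]
  simp [Part.mem_bind_iff, Part.mem_map_iff, Encodable.encodek]

theorem stage_sound (hc : Codes V c) {p : List Bool} {s : ℕ}
    (h : p ∈ stageList c s) : (V p).Dom := by
  rcases Option.isSome_iff_exists.1 (mem_stageList.1 h).2.2 with ⟨v, hv⟩
  have hv' : v ∈ c.eval (encode p) := evaln_sound hv
  rcases (eval_char hc p v).1 hv' with ⟨y, hy, _⟩
  exact Part.dom_iff_mem.2 ⟨y, hy⟩

theorem output_mem (hc : Codes V c) {p σ : List Bool} {s : ℕ}
    (h : p ∈ stageList c s) (hl : p.length ≤ σ.length) {y : List Bool} (hy : y ∈ V p) :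
    encode y ∈ outList c σ s := by
  rcases Option.isSome_iff_exists.1 (mem_stageList.1 h).2.2 with ⟨v, hv⟩
  have hv' : v ∈ c.eval (encode p) := evaln_sound hv
  rcases (eval_char hc p v).1 hv' with ⟨y', hy', hvy⟩
  have : y = y' := Part.mem_unique hy hy'
  subst this
  refine List.mem_filterMap.2 ⟨p, h, ?_⟩
  rw [decide_eq_true hl]
  show evaln s c (encode p) = some (encode y)
  rw [hvy]
  exact hv

/-- lift a finset of halting programs into the subtype. -/
def liftF (V : List Bool →. List Bool) (A : Finset (List Bool))
    (hA : ∀ p ∈ A, (V p).Dom) : Finset {p : List Bool // (V p).Dom} :=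
  A.attach.map ⟨fun x => ⟨x.1, hA x.1 x.2⟩, by
    intro x y h
    apply Subtype.ext
    simpa using congrArg Subtype.val h⟩

theorem mem_liftF {A : Finset (List Bool)} {hA : ∀ p ∈ A, (V p).Dom}
    {q : {p : List Bool // (V p).Dom}} : q ∈ liftF V A hA ↔ q.1 ∈ A := by
  constructor
  · intro h
    rcases Finset.mem_map.1 h with ⟨x, _, rfl⟩
    exact x.2
  · intro h
    exact Finset.mem_map.2 ⟨⟨q.1, h⟩, Finset.mem_attach _ _, Subtype.ext rfl⟩

theorem sum_liftF {A : Finset (List Bool)} {hA : ∀ p ∈ A, (V p).Dom} :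
    ∑ q ∈ liftF V A hA, ((2:ℝ))⁻¹ ^ q.1.length = ∑ p ∈ A, ((2:ℝ))⁻¹ ^ p.length := by
  unfold liftF
  rw [Finset.sum_map]
  exact Finset.sum_attach A fun p => ((2:ℝ))⁻¹ ^ p.length

theorem sum_le_Omega (hsum : Summable fun p : {p : List Bool // (V p).Dom} =>
      ((2:ℝ))⁻¹ ^ p.1.length)
    (B : Finset {p : List Bool // (V p).Dom}) :
    ∑ q ∈ B, ((2:ℝ))⁻¹ ^ q.1.length ≤ Omega V :=
  Summable.sum_le_tsum B (fun _ _ => by positivity) hsum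

theorem stage_sum (c : Code) (s : ℕ) :
    ∑ p ∈ (stageList c s).toFinset, ((2:ℝ))⁻¹ ^ p.length = (wsum c s : ℝ) / 2 ^ s := by
  rw [List.sum_toFinset _ (nodup_stageList c s)]
  exact listsum_pow fun p hp => (mem_stageList.1 hp).2.1

theorem condb_iff {c : Code} {σ : List Bool} {s : ℕ} :
    condb c σ s = true ↔ sval σ < (wsum c s : ℝ) / 2 ^ s := by
  rw [condb, decide_eq_true_eq, sval_eq,
    div_lt_div_iff₀ (by positivity) (by positivity)]
  constructor
  · intro h
    exact_mod_cast h
  · intro h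
    exact_mod_cast h

theorem stage_exists (hc : Codes V c)
    (hsum : Summable fun p : {p : List Bool // (V p).Dom} => ((2:ℝ))⁻¹ ^ p.1.length)
    {σ : List Bool} (hlt : sval σ < Omega V) : ∃ s, condb c σ s = true := by
  have h1 : ¬ ∀ B : Finset {p : List Bool // (V p).Dom},
      ∑ q ∈ B, ((2:ℝ))⁻¹ ^ q.1.length ≤ sval σ := by
    intro h
    exact absurd (Summable.tsum_le_of_sum_le hsum h) (not_le.2 hlt)
  push_neg at h1
  obtain ⟨F, hF⟩ := h1
  have ex : ∀ q : {p : List Bool // (V p).Dom}, ∃ k,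
      (evaln k c (encode q.1)).isSome := by
    intro q
    have hy : (V q.1).get q.2 ∈ V q.1 := Part.get_mem q.2
    have hv : encode ((V q.1).get q.2) ∈ c.eval (encode q.1) :=
      (eval_char hc q.1 _).2 ⟨_, hy, rfl⟩
    rcases evaln_complete.1 hv with ⟨k, hk⟩
    exact ⟨k, Option.isSome_iff_exists.2 ⟨_, hk⟩⟩
  set s := F.sup (fun q => max (Nat.find (ex q)) (max (encode q.1 + 1) q.1.length)) with hs
  have hmem : ∀ q ∈ F, q.1 ∈ stageList c s := by
    intro q hq
    have hle := Finset.le_sup (f := fun q =>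
      max (Nat.find (ex q)) (max (encode q.1 + 1) q.1.length)) hq
    rw [← hs] at hle
    have hle' : max (Nat.find (ex q)) (max (encode q.1 + 1) q.1.length) ≤ s := hle
    refine mem_stageList.2 ⟨?_, ?_, ?_⟩
    · omega
    · omega
    · rcases Option.isSome_iff_exists.1 (Nat.find_spec (ex q)) with ⟨v, hv⟩
      exact Option.isSome_iff_exists.2 ⟨v, evaln_mono (by omega) hv⟩
  have himg : F.image Subtype.val ⊆ (stageList c s).toFinset := by
    intro p hp
    rcases Finset.mem_image.1 hp with ⟨q, hq, rfl⟩
    exact List.mem_toFinset.2 (hmem q hq)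
  have h2 : ∑ q ∈ F, ((2:ℝ))⁻¹ ^ q.1.length
      = ∑ p ∈ F.image Subtype.val, ((2:ℝ))⁻¹ ^ p.length := by
    rw [Finset.sum_image]
    intro x _ y _ h
    exact Subtype.ext h
  have h3 : ∑ p ∈ F.image Subtype.val, ((2:ℝ))⁻¹ ^ p.length
      ≤ ∑ p ∈ (stageList c s).toFinset, ((2:ℝ))⁻¹ ^ p.length :=
    Finset.sum_le_sum_of_subset_of_nonneg himg (fun _ _ _ => by positivity)
  refine ⟨s, condb_iff.2 ?_⟩
  rw [← stage_sum c s]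
  calc sval σ < ∑ q ∈ F, ((2:ℝ))⁻¹ ^ q.1.length := hF
  _ = _ := h2
  _ ≤ _ := h3

theorem stage_complete (hc : Codes V c)
    (hsum : Summable fun p : {p : List Bool // (V p).Dom} => ((2:ℝ))⁻¹ ^ p.1.length)
    {σ : List Bool} {s : ℕ} (hcond : condb c σ s = true)
    (hub : Omega V ≤ sval σ + ((2:ℝ))⁻¹ ^ σ.length)
    {p : List Bool} (hdom : (V p).Dom) (hl : p.length ≤ σ.length) :
    p ∈ stageList c s := by
  by_contra hnot
  have hA : ∀ q ∈ (stageList c s).toFinset, (V q).Dom := by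
    intro q hq
    exact stage_sound hc (List.mem_toFinset.1 hq)
  set A := liftF V (stageList c s).toFinset hA with hAdef
  have hpA : (⟨p, hdom⟩ : {p : List Bool // (V p).Dom}) ∉ A := by
    rw [hAdef, mem_liftF]
    intro h
    exact hnot (List.mem_toFinset.1 h)
  have hsum1 : ∑ q ∈ insert (⟨p, hdom⟩ : {p : List Bool // (V p).Dom}) A,
      ((2:ℝ))⁻¹ ^ q.1.length ≤ Omega V := sum_le_Omega hsum _
  rw [Finset.sum_insert hpA] at hsum1
  have hsum2 : ∑ q ∈ A, ((2:ℝ))⁻¹ ^ q.1.length = (wsum c s : ℝ) / 2 ^ s := by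
    rw [hAdef, sum_liftF, stage_sum]
  have hpl : ((2:ℝ))⁻¹ ^ σ.length ≤ ((2:ℝ))⁻¹ ^ p.length :=
    pow_le_pow_of_le_one (by norm_num) (by norm_num) hl
  have hlt : sval σ < (wsum c s : ℝ) / 2 ^ s := condb_iff.1 hcond
  rw [hsum2] at hsum1
  linarith

end Semantics

section Computability

open Primrec

theorem band' {α : Type*} [Primcodable α] {f g : α → Bool} (hf : Primrec f)
    (hg : Primrec g) : Primrec fun a => f a && g a :=
  (Primrec.cond hf hg (Primrec.const false)).of_eq fun a => by cases h : f a <;> simp [h]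

theorem bor' {α : Type*} [Primcodable α] {f g : α → Bool} (hf : Primrec f)
    (hg : Primrec g) : Primrec fun a => f a || g a :=
  (Primrec.cond hf (Primrec.const true) hg).of_eq fun a => by cases h : f a <;> simp [h]

theorem pow2P : Primrec₂ (fun a b : ℕ => a ^ b) := Primrec₂.unpaired'.1 Nat.Primrec.pow

theorem filterMap_toList {β σ : Type*} (g : β → Option σ) (l : List β) :
    l.filterMap g = l.flatMap fun b => (g b).toList := by
  induction l with
  | nil => rfl
  | cons a l ih =>
      rw [List.filterMap_cons, List.flatMap_cons, ← ih]
      cases g a <;> simp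

theorem filterMapP {α β σ : Type*} [Primcodable α] [Primcodable β] [Primcodable σ]
    {f : α → List β} {g : α → β → Option σ} (hf : Primrec f) (hg : Primrec₂ g) :
    Primrec fun a => (f a).filterMap (g a) := by
  have h2 : Primrec₂ fun a b => (g a b).toList :=
    (Primrec.option_casesOn hg (Primrec.const ([] : List σ))
      ((Primrec.list_cons.comp Primrec.snd (Primrec.const [])).to₂)).of_eq
        fun p => by cases h : g p.1 p.2 <;> simp [h]
  exact (Primrec.list_flatMap hf h2).of_eq fun a => (filterMap_toList (g a) (f a)).symm

theorem svalNat_pair (b : List Bool) :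
    b.foldr (fun a p => ((cond a (2 ^ p.2) 0) + p.1, p.2 + 1)) ((0, 0) : ℕ × ℕ)
      = (svalNat b, b.length) := by
  induction b with
  | nil => rfl
  | cons a l ih => rw [List.foldr_cons, ih]; rfl

theorem svalNatP : Primrec svalNat := by
  have h : Primrec fun x : List Bool × (Bool × (ℕ × ℕ)) =>
      ((cond x.2.1 (2 ^ x.2.2.2) 0) + x.2.2.1, x.2.2.2 + 1) :=
    Primrec.pair
      (Primrec.nat_add.comp
        (Primrec.cond (Primrec.fst.comp Primrec.snd)
          (pow2P.comp (Primrec.const 2) (Primrec.snd.comp (Primrec.snd.comp Primrec.snd)))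
          (Primrec.const 0))
        (Primrec.fst.comp (Primrec.snd.comp Primrec.snd)))
      (Primrec.succ.comp (Primrec.snd.comp (Primrec.snd.comp Primrec.snd)))
  have h2 := Primrec.list_foldr (Primrec.id (α := List Bool))
    (Primrec.const ((0, 0) : ℕ × ℕ)) h.to₂
  exact (Primrec.fst.comp h2).of_eq fun l => by exact congrArg Prod.fst (svalNat_pair l)

theorem sumP : Primrec (List.sum : List ℕ → ℕ) := by
  have h : Primrec fun x : List ℕ × (ℕ × ℕ) => x.2.1 + x.2.2 :=
    Primrec.nat_add.comp (Primrec.fst.comp Primrec.snd) (Primrec.snd.comp Primrec.snd)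
  have h2 := Primrec.list_foldr (Primrec.id (α := List ℕ)) (Primrec.const 0) h.to₂
  have hs : ∀ l : List ℕ, List.foldr (fun b s => b + s) 0 l = l.sum := by
    intro l
    induction l with
    | nil => rfl
    | cons a l ih => simp [ih]
  exact h2.of_eq fun l => by exact hs l

theorem replicateP : Primrec (fun i : ℕ => List.replicate i true) := by
  have h := Primrec.nat_iterate (Primrec.id (α := ℕ)) (Primrec.const ([] : List Bool))
    ((Primrec.list_cons.comp (Primrec.const true) Primrec.snd).to₂)
  have hrep : ∀ i, (fun l : List Bool => true :: l)^[i] [] = List.replicate i true := by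
    intro i
    induction i with
    | zero => rfl
    | succ i ih => rw [Function.iterate_succ_apply', ih, List.replicate_succ]
  exact h.of_eq fun i => by exact hrep i

variable (c : Code)

theorem evalnP : Primrec fun x : ℕ × ℕ => evaln x.1 c x.2 :=
  primrec_evaln.comp (Primrec.pair (Primrec.pair Primrec.fst (Primrec.const c)) Primrec.snd)

theorem stageListP : Primrec (stageList c) := by
  refine filterMapP Primrec.list_range ?_
  refine Primrec₂.mk (Primrec.option_bind
    (f := fun sk : ℕ × ℕ => Encodable.decode (α := List Bool) sk.2)
    (g := fun (sk : ℕ × ℕ) (p : List Bool) =>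
      cond (decide (Encodable.encode p = sk.2) && decide (p.length ≤ sk.1)
            && (Nat.Partrec.Code.evaln sk.1 c sk.2).isSome) (some p) none)
    ((Primrec.decode (α := List Bool)).comp (Primrec.snd (α := ℕ) (β := ℕ))) ?_)
  refine Primrec₂.mk (Primrec.cond ?_
    (Primrec.option_some.comp Primrec.snd)
    (Primrec.const (none : Option (List Bool))))
  refine band' (band' ?_ ?_) ?_
  · exact (Primrec.eq (α := ℕ)).decide.comp (Primrec.encode.comp Primrec.snd) (Primrec.snd.comp Primrec.fst)
  · exact Primrec.nat_le.decide.comp (Primrec.list_length.comp Primrec.snd)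
      (Primrec.fst.comp Primrec.fst)
  · exact Primrec.option_isSome.comp ((evalnP c).comp
      (Primrec.pair (Primrec.fst.comp Primrec.fst) (Primrec.snd.comp Primrec.fst)))

theorem wsumP : Primrec (wsum c) :=
  sumP.comp (Primrec.list_map (stageListP c)
    ((pow2P.comp (Primrec.const 2)
      (Primrec.nat_sub.comp Primrec.fst (Primrec.list_length.comp Primrec.snd))).to₂))

theorem condbP : Primrec₂ (condb c) :=
  (Primrec.nat_lt.decide.comp
    (Primrec.nat_mul.comp (svalNatP.comp Primrec.fst)
      (pow2P.comp (Primrec.const 2) Primrec.snd))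
    (Primrec.nat_mul.comp ((wsumP c).comp Primrec.snd)
      (pow2P.comp (Primrec.const 2) (Primrec.list_length.comp Primrec.fst)))).to₂


theorem outListP : Primrec₂ (outList c) := by
  refine Primrec₂.mk ?_
  refine filterMapP ((stageListP c).comp Primrec.snd) ?_
  refine Primrec₂.mk (Primrec.cond
    (Primrec.nat_le.decide.comp (Primrec.list_length.comp Primrec.snd)
      (Primrec.list_length.comp (Primrec.fst.comp Primrec.fst)))
    ((evalnP c).comp (Primrec.pair (Primrec.snd.comp Primrec.fst)
      (Primrec.encode.comp Primrec.snd)))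
    (Primrec.const (none : Option ℕ)))

theorem membP : Primrec₂ memb := by
  have h : Primrec fun x : (ℕ × List ℕ) × (ℕ × Bool) => (decide (x.2.1 = x.1.1) || x.2.2) :=
    bor' (Primrec.eq.decide.comp (Primrec.fst.comp Primrec.snd) (Primrec.fst.comp Primrec.fst))
      (Primrec.snd.comp Primrec.snd)
  exact (Primrec.list_foldr Primrec.snd (Primrec.const false) h.to₂).to₂

theorem freshP : Primrec₂ (fresh c) := by
  refine Primrec₂.mk (Primrec.list_headI.comp ?_)
  refine filterMapP
    (Primrec.list_map (Primrec.list_range.comp (Primrec.succ.comp Primrec.snd))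
      ((replicateP.comp Primrec.snd).to₂)) ?_
  refine Primrec₂.mk (Primrec.cond
    ((membP).comp (Primrec.encode.comp Primrec.snd)
      ((outListP c).comp (Primrec.fst.comp Primrec.fst) (Primrec.snd.comp Primrec.fst)))
    (Primrec.const (none : Option (List Bool)))
    (Primrec.option_some.comp Primrec.snd))

end Computability

section Machine

variable (V : List Bool →. List Bool) (c : Code)

/-- the auxiliary machine: run `V` on the input, treat the output `σ` as a candidate
initial segment of `Ω`, search for a stage `s` whose accumulated weight exceeds
`sval σ`, and output a string avoiding all outputs of programs of length `≤ |σ|`. -/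
def machine : List Bool →. List Bool :=
  fun q => (V q).bind fun σ => Nat.rfindOpt fun s =>
    cond (condb c σ s) (some (fresh c σ s)) none

theorem machine_partrec (hV : Partrec V) : Partrec (machine V c) := by
  refine hV.bind ?_
  have h : Primrec fun x : (List Bool × List Bool) × ℕ =>
      cond (condb c x.1.2 x.2) (some (fresh c x.1.2 x.2)) none :=
    Primrec.cond ((condbP c).comp (Primrec.snd.comp Primrec.fst) Primrec.snd)
      (Primrec.option_some.comp ((freshP c).comp (Primrec.snd.comp Primrec.fst) Primrec.snd))
      (Primrec.const (none : Option (List Bool)))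
  exact Partrec.rfindOpt h.to_comp

theorem machine_dom {q : List Bool} (h : (machine V c q).Dom) : (V q).Dom := by
  rcases Part.dom_iff_mem.1 h with ⟨x, hx⟩
  rcases Part.mem_bind_iff.1 hx with ⟨σ, hσ, _⟩
  exact Part.dom_iff_mem.2 ⟨σ, hσ⟩

end Machine

end Stmt15Aux

open Stmt15Aux

/-- `Ω` is Kolmogorov random: `K(Ω[n]) > n - k` for some constant `k` and all `n`.
Here `b` with `|b| = n`, `sval b < Ω ≤ sval b + 2^{-n}` is the length-`n` initial
segment of the binary expansion of `Ω` (trailing-1's convention). -/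
theorem stmt15 (V : List Bool →. List Bool) (hV : PFUniversal V) :
    ∃ k : ℕ, ∀ (n : ℕ) (b : List Bool), b.length = n →
      sval b < Omega V → Omega V ≤ sval b + ((2 : ℝ))⁻¹ ^ n →
        (n : ℕ∞) < Cpx V b + (k : ℕ∞) := by
  classical
  by_cases hsum : Summable fun p : {p : List Bool // (V p).Dom} => ((2:ℝ))⁻¹ ^ p.1.length
  case neg =>
    refine ⟨0, fun n b hb h1 h2 => ?_⟩
    have h0 : Omega V = 0 := tsum_eq_zero_of_not_summable hsum
    rw [h0] at h1
    exact absurd h1 (not_lt.2 (sval_nonneg b))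
  case pos =>
    obtain ⟨c, hc0⟩ := Nat.Partrec.Code.exists_code.1 hV.1
    have hc : Codes V c := hc0
    obtain ⟨k, hk⟩ := hV.2.2 (machine V c) (machine_partrec V c hV.1)
      (fun a ha b hb hab =>
        hV.2.1 a (machine_dom V c ha) b (machine_dom V c hb) hab)
    refine ⟨k, fun n b hbn h1 h2 => ?_⟩
    subst hbn
    obtain ⟨s1, hs1⟩ := stage_exists hc hsum h1
    set f : ℕ → Option (List Bool) := fun s =>
      cond (condb c b s) (some (fresh c b s)) none with hf
    have hdom : (Nat.rfindOpt f).Dom := by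
      refine Nat.rfindOpt_dom.2 ⟨s1, fresh c b s1, ?_⟩
      show f s1 = some _
      rw [hf]
      simp only
      rw [hs1]
      rfl
    set x := (Nat.rfindOpt f).get hdom with hx
    have hxmem : x ∈ Nat.rfindOpt f := Part.get_mem hdom
    obtain ⟨s0, hs0⟩ := Nat.rfindOpt_spec hxmem
    have hcond : condb c b s0 = true ∧ fresh c b s0 = x := by
      rcases Bool.eq_false_or_eq_true (condb c b s0) with h | h
      · have hfs : f s0 = some (fresh c b s0) := by rw [hf]; simp only; rw [h]; rfl
        rw [hfs] at hs0
        exact ⟨h, Option.mem_some_iff.1 hs0⟩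
      · have hfs : f s0 = none := by rw [hf]; simp only; rw [h]; rfl
        rw [hfs] at hs0
        cases hs0
    have hlow : ((b.length + 1 : ℕ) : ℕ∞) ≤ Cpx V x := by
      refine le_sInf ?_
      rintro m ⟨p, hxp, rfl⟩
      have hdomp : (V p).Dom := Part.dom_iff_mem.2 ⟨x, hxp⟩
      by_cases hpn : p.length ≤ b.length
      · exfalso
        have hst := stage_complete hc hsum hcond.1 h2 hdomp hpn
        have hout := output_mem hc hst hpn hxp
        rw [← hcond.2] at hout
        exact fresh_spec c b s0 hout
      · exact_mod_cast Nat.succ_le_of_lt (not_le.1 hpn)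
    have hmid : Cpx (machine V c) x ≤ Cpx V b := by
      refine le_sInf ?_
      rintro m ⟨q, hbq, rfl⟩
      have hxq : x ∈ machine V c q := Part.mem_bind_iff.2 ⟨b, hbq, hxmem⟩
      exact sInf_le ⟨q, hxq, rfl⟩
    calc ((b.length : ℕ) : ℕ∞) < ((b.length + 1 : ℕ) : ℕ∞) := by
          exact_mod_cast Nat.lt_succ_self _
    _ ≤ Cpx V x := hlow
    _ ≤ Cpx (machine V c) x + (k : ℕ∞) := hk x
    _ ≤ Cpx V b + (k : ℕ∞) := add_le_add_left hmid (k : ℕ∞)
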